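/- Let R = [0,a]×[0,b] with a,b > 0, let A ⊆ [0,b] be Lebesgue measurable with Lebesgue measure m(A), and let Γ be the family of curves inside R connecting {0}×([0,b]∖A) to {a}×([0,b]∖A). With f_{s+ti}(x+yi) = (x/s−(t/s)y)+yi for s > 0, the liminf as s+|t| → ∞ of (1/(s + t²/s))·mod(f_{s+ti}(Γ)) is at least (b − 2m(A))/a. -/

import Mathlib

open MeasureTheory

/-- Line integral of a density `ρ` along a curve `γ : ℝ → ℂ` parametrized on `[0,1]`. -/
noncomputable def curveIntegralDensity (ρ : ℂ → ℝ) (γ : ℝ → ℂ) : ℝ :=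
  ∫ t in (0:ℝ)..1, ρ (γ t) * ‖deriv γ t‖

/-- `ρ` is an allowable (admissible) metric for the curve family `Γ`. -/
def Allowable (ρ : ℂ → ℝ) (Γ : Set (ℝ → ℂ)) : Prop :=
  Measurable ρ ∧ (∀ z, 0 ≤ ρ z) ∧ ∀ γ ∈ Γ, 1 ≤ curveIntegralDensity ρ γ

/-- The modulus of a curve family. -/
noncomputable def modulus (Γ : Set (ℝ → ℂ)) : ENNReal :=
  ⨅ (ρ : ℂ → ℝ) (_ : Allowable ρ Γ), ∫⁻ z : ℂ, ENNReal.ofReal (ρ z ^ 2)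

open Complex

lemma slice_cs {g : ℝ → ℝ} (hg0 : ∀ u, 0 ≤ g u) {c : ℝ} (hc : 0 < c)
    (hle : c ≤ ∫ u in (0:ℝ)..1, g u) :
    ENNReal.ofReal (c ^ 2) ≤ ∫⁻ u in Set.Ioc (0:ℝ) 1, ENNReal.ofReal (g u ^ 2) := by
  have h01 : (0:ℝ) ≤ 1 := zero_le_one
  have hInt : IntervalIntegrable g volume 0 1 := by
    by_contra h
    rw [intervalIntegral.integral_undef h] at hle
    linarith
  have hIoc : IntegrableOn g (Set.Ioc (0:ℝ) 1) volume :=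
    (intervalIntegrable_iff_integrableOn_Ioc_of_le h01).1 hInt
  set μ := volume.restrict (Set.Ioc (0:ℝ) 1) with hμ
  have hμuniv : μ Set.univ = 1 := by
    simp [hμ, Real.volume_Ioc]
  have h1 : ENNReal.ofReal c ≤ ∫⁻ u, ENNReal.ofReal (g u) ∂μ := by
    rw [← ofReal_integral_eq_lintegral_ofReal hIoc (Filter.Eventually.of_forall hg0)]
    apply ENNReal.ofReal_le_ofReal
    rwa [intervalIntegral.integral_of_le h01] at hle
  have hae : AEMeasurable (fun u => ENNReal.ofReal (g u)) μ :=
    ENNReal.measurable_ofReal.comp_aemeasurable hIoc.aemeasurable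
  have hconj : (2:ℝ).HolderConjugate 2 := Real.HolderConjugate.two_two
  have hH := ENNReal.lintegral_mul_le_Lp_mul_Lq μ hconj hae
    (aemeasurable_const : AEMeasurable (fun _ : ℝ => (1:ENNReal)) μ)
  simp only [Pi.mul_apply, mul_one, ENNReal.one_rpow, lintegral_one, hμuniv,
    ENNReal.one_rpow] at hH
  have h2 : ENNReal.ofReal c ≤ (∫⁻ u, ENNReal.ofReal (g u) ^ (2:ℝ) ∂μ) ^ (1/2:ℝ) :=
    le_trans h1 hH
  have h3 : ENNReal.ofReal c ^ (2:ℝ) ≤ ∫⁻ u, ENNReal.ofReal (g u) ^ (2:ℝ) ∂μ := by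
    calc ENNReal.ofReal c ^ (2:ℝ)
        ≤ ((∫⁻ u, ENNReal.ofReal (g u) ^ (2:ℝ) ∂μ) ^ (1/2:ℝ)) ^ (2:ℝ) :=
          ENNReal.rpow_le_rpow h2 (by norm_num)
      _ = ∫⁻ u, ENNReal.ofReal (g u) ^ (2:ℝ) ∂μ := by
          rw [← ENNReal.rpow_mul]; norm_num
  calc ENNReal.ofReal (c ^ 2) = ENNReal.ofReal c ^ (2:ℝ) := by
        rw [ENNReal.ofReal_rpow_of_pos hc, Real.rpow_two]
    _ ≤ ∫⁻ u, ENNReal.ofReal (g u) ^ (2:ℝ) ∂μ := h3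
    _ = ∫⁻ u, ENNReal.ofReal (g u ^ 2) ∂μ := by
        refine lintegral_congr fun u => ?_
        rw [ENNReal.ofReal_rpow_of_nonneg (hg0 u) (by norm_num), Real.rpow_two]

set_option maxHeartbeats 2000000 in
/-- Lemma 5.3 of the paper: for the family `Γ` of curves in the rectangle `[0,a]×[0,b]`
joining `{0}×([0,b]∖A)` to `{a}×([0,b]∖A)`, the liminf as `s+|t| → ∞` of
`(1/(s+t²/s))·mod(f_{s+ti}(Γ))` is at least `(b − 2m(A))/a`. -/
theorem liminf_modulus_rectangle (a b : ℝ) (ha : 0 < a) (hb : 0 < b)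
    (A : Set ℝ) (hA : MeasurableSet A) (hAsub : A ⊆ Set.Icc 0 b)
    (Γ : Set (ℝ → ℂ))
    (hΓ : Γ = {γ : ℝ → ℂ | ContDiff ℝ 1 γ ∧
      (∀ u ∈ Set.Icc (0:ℝ) 1, (γ u).re ∈ Set.Icc 0 a ∧ (γ u).im ∈ Set.Icc 0 b) ∧
      (γ 0).re = 0 ∧ (γ 0).im ∉ A ∧ (γ 1).re = a ∧ (γ 1).im ∉ A}) :
    ∀ ε > (0:ℝ), ∃ M : ℝ, ∀ s t : ℝ, 0 < s → M ≤ s + |t| →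
      ENNReal.ofReal ((b - 2 * (MeasureTheory.volume A).toReal) / a - ε)
        ≤ modulus ((fun γ : ℝ → ℂ =>
              (fun z : ℂ => ((z.re / s - (t / s) * z.im : ℝ) : ℂ) + z.im * I) ∘ γ) '' Γ)
            / ENNReal.ofReal (s + t ^ 2 / s) := by
  intro ε hε
  refine ⟨max 1 (2 / ε), fun s t hs hM => ?_⟩
  set mA := (volume A).toReal with hmA
  by_cases hsign : (b - 2 * mA) / a - ε ≤ 0
  · rw [ENNReal.ofReal_eq_zero.2 hsign]; exact zero_le
  push_neg at hsign
  have hst : (1:ℝ) ≤ s + |t| := le_trans (le_max_left _ _) hM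
  have hstpos : (0:ℝ) < s + |t| := lt_of_lt_of_le one_pos hst
  have hD : (0:ℝ) < s^2 + t^2 := by positivity
  set D := s^2 + t^2 with hDdef
  set δ := a * t / D with hδdef
  set q := a * s / D with hqdef
  have hq : 0 < q := by rw [hqdef]; positivity
  have hδa : |δ| ≤ a * ε := by
    have h2 : 2 / ε ≤ s + |t| := le_trans (le_max_right _ _) hM
    have h4 : 2 ≤ ε * (s + |t|) := by
      rw [div_le_iff₀ hε] at h2; linarith
    have h3 : |t| * (s + |t|) ≤ 2 * D := by
      rw [hDdef]; nlinarith [abs_nonneg t, _root_.sq_abs t, sq_nonneg (s - |t|)]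
    have h5 : |t| ≤ ε * D := by nlinarith [abs_nonneg t, hD]
    have habs : |δ| = a * |t| / D := by
      rw [hδdef, abs_div, abs_mul, abs_of_pos ha, abs_of_pos hD]
    rw [habs, div_le_iff₀ hD]
    nlinarith [ha.le]
  -- geometric data
  set V : ℂ := (q : ℂ) + (δ : ℂ) * I with hVdef
  set W : ℂ := ((-(t/s) : ℝ) : ℂ) + I with hWdef
  have hVre : V.re = q := by simp [hVdef]
  have hVim : V.im = δ := by simp [hVdef]
  have hWre : W.re = -(t/s) := by simp [hWdef]
  have hWim : W.im = 1 := by simp [hWdef]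
  set L := Real.sqrt (q^2 + δ^2) with hLdef
  have hL0 : 0 < L := Real.sqrt_pos.2 (by positivity)
  have hLsq : L^2 = a^2 / D := by
    rw [hLdef, Real.sq_sqrt (by positivity)]
    rw [hqdef, hδdef]
    field_simp
    rw [hDdef]
  have hnormV : ‖V‖ = L := by
    rw [Complex.norm_def, Complex.normSq_apply, hVre, hVim, hLdef]
    congr 1; ring
  -- the linear map
  set T : ℂ →ₗ[ℝ] ℂ := Complex.reLm.smulRight V + Complex.imLm.smulRight W with hTdef
  have hTapp : ∀ w : ℂ, T w = w.re • V + w.im • W := fun w => rfl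
  have hTre : ∀ w : ℂ, (T w).re = w.re * q - w.im * (t/s) := by
    intro w
    rw [hTapp]
    simp [Complex.real_smul, hVre, hWre]
    ring
  have hTim : ∀ w : ℂ, (T w).im = w.re * δ + w.im := by
    intro w
    rw [hTapp]
    simp [Complex.real_smul, hVim, hWim]
  have hdet : LinearMap.det T = a / s := by
    have hMat : (LinearMap.toMatrix Complex.basisOneI Complex.basisOneI) T
        = !![q, -(t/s); δ, 1] := by
      ext i j
      fin_cases i <;> fin_cases j <;>
        simp [LinearMap.toMatrix_apply, Complex.coe_basisOneI_repr, Complex.coe_basisOneI,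
          hTre, hTim]
    rw [← LinearMap.det_toMatrix Complex.basisOneI, hMat, Matrix.det_fin_two_of]
    rw [hqdef, hδdef]
    field_simp
    rw [hDdef]; ring
  have hsum : q + δ * (t/s) = a / s := by
    rw [hqdef, hδdef]
    field_simp
    rw [hDdef]
  have hTinj : Function.Injective T := by
    intro w1 w2 h
    have hre := congrArg Complex.re h
    have him := congrArg Complex.im h
    rw [hTre, hTre] at hre
    rw [hTim, hTim] at him
    have key : (w1.re - w2.re) * (q + δ * (t/s)) = 0 := by
      linear_combination hre + (t/s) * him
    have hpos : 0 < q + δ * (t/s) := by rw [hsum]; positivity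
    have hre2 : w1.re = w2.re := by
      rcases mul_eq_zero.1 key with h' | h'
      · linarith [sub_eq_zero.1 h']
      · exact absurd h' hpos.ne'
    have him2 : w1.im = w2.im := by rw [hre2] at him; linarith
    exact Complex.ext hre2 him2
  set Tc : ℂ →L[ℝ] ℂ := LinearMap.toContinuousLinearMap T with hTcdef
  have hTcfun : ⇑Tc = fun z => T z := by
    rw [hTcdef]; exact LinearMap.coe_toContinuousLinearMap' T
  have hTcdet : Tc.det = a / s := by
    have : Tc.det = LinearMap.det (↑Tc : ℂ →ₗ[ℝ] ℂ) := rfl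
    rw [this, hTcdef, LinearMap.coe_toContinuousLinearMap, hdet]
  -- the good set
  set c0 := max 0 (-δ) with hc0def
  set c1 := min b (b - δ) with hc1def
  set B := (fun y => y + δ) ⁻¹' A with hBdef
  set good := (Set.Icc c0 c1) \ (A ∪ B) with hgooddef
  have hBmeas : MeasurableSet B := hA.preimage (measurable_id.add_const δ)
  have hgoodmeas : MeasurableSet good := measurableSet_Icc.diff (hA.union hBmeas)
  have hvolA : volume A ≠ ⊤ := by
    refine ne_of_lt (lt_of_le_of_lt (measure_mono hAsub) ?_)
    rw [Real.volume_Icc]; exact ENNReal.ofReal_lt_top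
  have hgoodvol : ENNReal.ofReal (b - |δ| - 2 * mA) ≤ volume good := by
    have h1 : volume (Set.Icc c0 c1) = ENNReal.ofReal (b - |δ|) := by
      rw [Real.volume_Icc]
      congr 1
      rcases le_or_gt 0 δ with h | h
      · rw [hc0def, hc1def, max_eq_left (by linarith), min_eq_right (by linarith),
          _root_.abs_of_nonneg h]
        ring
      · rw [hc0def, hc1def, max_eq_right (by linarith), min_eq_left (by linarith),
          abs_of_neg h]
    have h2 : volume (A ∪ B) ≤ ENNReal.ofReal (2 * mA) := by
      refine le_trans (measure_union_le _ _) ?_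
      have hBvol : volume B = volume A := measure_preimage_add_right volume δ A
      rw [hBvol, ← ENNReal.ofReal_toReal hvolA, ← hmA,
        ← ENNReal.ofReal_add ENNReal.toReal_nonneg ENNReal.toReal_nonneg, two_mul]
    calc ENNReal.ofReal (b - |δ| - 2 * mA)
        = ENNReal.ofReal (b - |δ|) - ENNReal.ofReal (2 * mA) := by
          rw [ENNReal.ofReal_sub _ (by positivity)]
      _ ≤ volume (Set.Icc c0 c1) - volume (A ∪ B) := tsub_le_tsub h1.ge h2
      _ ≤ volume good := le_measure_diff
  -- the parameter set
  set e := Complex.measurableEquivRealProd with hedef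
  set S := e ⁻¹' ((Set.Ioc (0:ℝ) 1) ×ˢ good) with hSdef
  have hSmeas : MeasurableSet S := e.measurable (measurableSet_Ioc.prod hgoodmeas)
  -- the main modulus lower bound
  have hmod : ∀ ρ : ℂ → ℝ, Allowable ρ ((fun γ : ℝ → ℂ =>
        (fun z : ℂ => ((z.re / s - (t / s) * z.im : ℝ) : ℂ) + z.im * I) ∘ γ) '' Γ) →
      ENNReal.ofReal (((b - 2 * mA) / a - ε) * (D / s))
        ≤ ∫⁻ z : ℂ, ENNReal.ofReal (ρ z ^ 2) := by
    intro ρ hρ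
    obtain ⟨hρm, hρ0, hρadm⟩ := hρ
    -- per-slice lower bound
    have hslice : ∀ y ∈ good, ENNReal.ofReal (D / a^2)
        ≤ ∫⁻ u in Set.Ioc (0:ℝ) 1, ENNReal.ofReal (ρ (u • V + y • W) ^ 2) := by
      intro y hy
      have hymem : y ∈ Set.Icc c0 c1 := hy.1
      have hyA : y ∉ A := fun h => hy.2 (Or.inl h)
      have hyB : y + δ ∉ A := fun h => hy.2 (Or.inr h)
      have hy0 : 0 ≤ y := le_trans (le_max_left 0 (-δ)) hymem.1
      have hyd : -δ ≤ y := le_trans (le_max_right 0 (-δ)) hymem.1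
      have hyb : y ≤ b := le_trans hymem.2 (min_le_left _ _)
      have hybd : y ≤ b - δ := le_trans hymem.2 (min_le_right _ _)
      set γy : ℝ → ℂ := fun u => ((u * a : ℝ) : ℂ) + ((y + u * δ : ℝ) : ℂ) * I with hγdef
      have hγre : ∀ u : ℝ, (γy u).re = u * a := by intro u; simp [hγdef]
      have hγim : ∀ u : ℝ, (γy u).im = y + u * δ := by intro u; simp [hγdef]
      have hmemΓ : γy ∈ Γ := by
        rw [hΓ]
        refine ⟨?_, ?_, ?_, ?_, ?_, ?_⟩
        · apply ContDiff.add
          · exact Complex.ofRealCLM.contDiff.comp (contDiff_id.mul contDiff_const)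
          · exact (Complex.ofRealCLM.contDiff.comp
              (contDiff_const.add (contDiff_id.mul contDiff_const))).mul contDiff_const
        · intro u hu
          obtain ⟨hu0, hu1⟩ := hu
          constructor
          · rw [hγre]
            exact ⟨mul_nonneg hu0 ha.le, by nlinarith⟩
          · rw [hγim]
            rcases le_or_gt 0 δ with h | h
            · exact ⟨by nlinarith, by nlinarith⟩
            · exact ⟨by nlinarith, by nlinarith⟩
        · rw [hγre]; ring
        · rw [hγim]; simpa using hyA
        · rw [hγre]; ring
        · rw [hγim]; simpa using hyB
      have himg := hρadm _ ⟨γy, hmemΓ, rfl⟩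
      have hcomp : (fun z : ℂ => ((z.re / s - (t / s) * z.im : ℝ) : ℂ) + z.im * I) ∘ γy
          = fun u => u • V + y • W := by
        funext u
        apply Complex.ext
        · simp only [Function.comp_apply, Complex.add_re, Complex.ofReal_re, Complex.mul_re,
            Complex.ofReal_im, Complex.I_re, Complex.I_im, Complex.real_smul, hγre, hγim,
            hVre, hVim, hWre, hWim, mul_zero, zero_mul, sub_zero, mul_one]
          rw [hqdef, hδdef]
          field_simp
          rw [hDdef]; ring
        · simp only [Function.comp_apply, Complex.add_im, Complex.ofReal_re, Complex.mul_im,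
            Complex.ofReal_im, Complex.I_re, Complex.I_im, Complex.real_smul, hγre, hγim,
            hVre, hVim, hWre, hWim, mul_zero, zero_mul, add_zero, zero_add, mul_one]
          ring
      have hderiv : ∀ u : ℝ, deriv (fun u : ℝ => u • V + y • W) u = V := by
        intro u
        have h := (((hasDerivAt_id u).smul_const V).add_const (y • W)).deriv
        simpa using h
      rw [curveIntegralDensity] at himg
      simp only [hcomp, hderiv, hnormV] at himg
      rw [intervalIntegral.integral_mul_const] at himg
      have hint : 1 / L ≤ ∫ u in (0:ℝ)..1, ρ (u • V + y • W) := by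
        rw [div_le_iff₀ hL0]
        simpa using himg
      have hcs := slice_cs (g := fun u => ρ (u • V + y • W)) (fun u => hρ0 _)
        (by positivity : (0:ℝ) < 1 / L) hint
      have hLp : (1 / L)^2 = D / a^2 := by
        rw [div_pow, one_pow, hLsq, one_div_div]
      rw [hLp] at hcs
      exact hcs
    -- change of variables and assembly
    have hcont : Continuous fun p : ℝ × ℝ => (p.1 • V + p.2 • W : ℂ) := by
      fun_prop
    have hmeasF : Measurable fun p : ℝ × ℝ => ENNReal.ofReal (ρ (p.1 • V + p.2 • W) ^ 2) :=
      ENNReal.measurable_ofReal.comp ((hρm.comp hcont.measurable).pow_const 2)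
    have hfd : ∀ w ∈ S, HasFDerivWithinAt (fun z : ℂ => T z) Tc S w := by
      intro w _
      have h := Tc.hasFDerivAt (x := w)
      rw [hTcfun] at h
      exact h.hasFDerivWithinAt
    have hCoV := lintegral_image_eq_lintegral_abs_det_fderiv_mul volume hSmeas hfd
      hTinj.injOn (fun z => ENNReal.ofReal (ρ z ^ 2))
    have step1 : ∫⁻ z in S, ENNReal.ofReal (ρ (T z) ^ 2)
        = ∫⁻ p in (Set.Ioc (0:ℝ) 1) ×ˢ good,
            ENNReal.ofReal (ρ (p.1 • V + p.2 • W) ^ 2) := by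
      rw [hSdef]
      calc ∫⁻ z in e ⁻¹' ((Set.Ioc (0:ℝ) 1) ×ˢ good), ENNReal.ofReal (ρ (T z) ^ 2)
          = ∫⁻ z in e ⁻¹' ((Set.Ioc (0:ℝ) 1) ×ˢ good),
              (fun p : ℝ × ℝ => ENNReal.ofReal (ρ (p.1 • V + p.2 • W) ^ 2)) (e z) := by
            refine lintegral_congr fun z => ?_
            have hz : ((e z).1 : ℝ) • V + ((e z).2 : ℝ) • W = T z := by
              rw [hTapp]; rfl
            simp only [hz]
        _ = ∫⁻ p in (Set.Ioc (0:ℝ) 1) ×ˢ good,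
              ENNReal.ofReal (ρ (p.1 • V + p.2 • W) ^ 2) :=
            Complex.volume_preserving_equiv_real_prod.setLIntegral_comp_preimage
              (measurableSet_Ioc.prod hgoodmeas) hmeasF
    have step2 : ∫⁻ p in (Set.Ioc (0:ℝ) 1) ×ˢ good,
          ENNReal.ofReal (ρ (p.1 • V + p.2 • W) ^ 2)
        = ∫⁻ y in good, ∫⁻ u in Set.Ioc (0:ℝ) 1,
            ENNReal.ofReal (ρ (u • V + y • W) ^ 2) := by
      rw [Measure.volume_eq_prod, ← Measure.prod_restrict]
      exact lintegral_prod_symm _ hmeasF.aemeasurable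
    calc ENNReal.ofReal (((b - 2 * mA) / a - ε) * (D / s))
        ≤ ENNReal.ofReal ((a / s) * ((D / a^2) * (b - |δ| - 2 * mA))) := by
          apply ENNReal.ofReal_le_ofReal
          have hda : |δ| / a ≤ ε := (div_le_iff₀ ha).2 (by linarith [hδa])
          have e1 : (b - 2*mA)/a - |δ|/a = (b - |δ| - 2*mA)/a := by ring
          have k1 : (b - 2 * mA) / a - ε ≤ (b - |δ| - 2 * mA) / a := by
            rw [← e1]; linarith
          have k2 : (a/s)*((D/a^2)*(b - |δ| - 2*mA)) = ((b - |δ| - 2*mA)/a) * (D/s) := by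
            field_simp
          rw [k2]
          exact mul_le_mul_of_nonneg_right k1 (by positivity)
      _ = ENNReal.ofReal (a/s) * (ENNReal.ofReal (D/a^2) * ENNReal.ofReal (b - |δ| - 2*mA)) := by
          rw [ENNReal.ofReal_mul (by positivity : (0:ℝ) ≤ a/s),
            ENNReal.ofReal_mul (by positivity : (0:ℝ) ≤ D/a^2)]
      _ ≤ ENNReal.ofReal (a/s) * (ENNReal.ofReal (D/a^2) * volume good) := by
          gcongr
      _ = ENNReal.ofReal (a/s) * ∫⁻ y in good, (ENNReal.ofReal (D/a^2)) := by
          rw [setLIntegral_const]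
      _ ≤ ENNReal.ofReal (a/s) * ∫⁻ y in good, ∫⁻ u in Set.Ioc (0:ℝ) 1,
            ENNReal.ofReal (ρ (u • V + y • W) ^ 2) :=
          mul_le_mul_right (setLIntegral_mono' hgoodmeas hslice) _
      _ = ENNReal.ofReal (a/s) * ∫⁻ z in S, ENNReal.ofReal (ρ (T z) ^ 2) := by
          rw [step1, step2]
      _ = ∫⁻ z in S, ENNReal.ofReal |Tc.det| * ENNReal.ofReal (ρ (T z) ^ 2) := by
          rw [hTcdet, abs_of_pos (show (0:ℝ) < a/s by positivity),
            lintegral_const_mul' _ _ ENNReal.ofReal_ne_top]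
      _ = ∫⁻ z in (fun z : ℂ => T z) '' S, ENNReal.ofReal (ρ z ^ 2) := hCoV.symm
      _ ≤ ∫⁻ z : ℂ, ENNReal.ofReal (ρ z ^ 2) := setLIntegral_le_lintegral _ _
  -- finish: divide
  have hDs : s + t^2/s = D/s := by rw [hDdef]; field_simp
  have hne0 : ENNReal.ofReal (s + t^2/s) ≠ 0 := by
    rw [ne_eq, ENNReal.ofReal_eq_zero, not_le]
    positivity
  rw [ENNReal.le_div_iff_mul_le (Or.inl hne0) (Or.inl ENNReal.ofReal_ne_top), hDs,
    ← ENNReal.ofReal_mul hsign.le]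
  unfold modulus
  exact le_iInf₂ fun ρ hρ => hmod ρ hρ
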